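/- Let φ : [0,∞) → [0,∞) be a nonincreasing function and suppose there exist constants d > 0, α > 0, β > 1 and k₀ ≥ 0 such that φ(h) ≤ d·(h−k)^{−α}·φ(k)^{β} for all h > k ≥ k₀. Then φ(k₀ + T) = 0, where T > 0 is defined by T^{α} = d·2^{αβ/(β−1)}·φ(k₀)^{β−1}. -/

import Mathlib

/-- Stampacchia's iteration lemma: if `φ : [0,∞) → [0,∞)` is nonincreasing and satisfies
`φ(h) ≤ d (h-k)^(-α) φ(k)^β` for all `h > k ≥ k₀`, then `φ(k₀ + T) = 0` where
`T^α = d · 2^(αβ/(β-1)) · φ(k₀)^(β-1)`. -/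
theorem stampacchia (φ : ℝ → ℝ)
    (hφ_nonneg : ∀ x, 0 ≤ x → 0 ≤ φ x)
    (hφ_mono : ∀ x y, 0 ≤ x → x ≤ y → φ y ≤ φ x)
    (d α β k₀ T : ℝ) (hd : 0 < d) (hα : 0 < α) (hβ : 1 < β) (hk₀ : 0 ≤ k₀)
    (hiter : ∀ h k : ℝ, k₀ ≤ k → k < h → φ h ≤ d * (h - k) ^ (-α) * (φ k) ^ β)
    (hT : 0 < T)
    (hTdef : T ^ α = d * (2 : ℝ) ^ (α * β / (β - 1)) * (φ k₀) ^ (β - 1)) :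
    φ (k₀ + T) = 0 := by
  have hβ1 : (0:ℝ) < β - 1 := by linarith
  have hPnn : 0 ≤ φ k₀ := hφ_nonneg k₀ hk₀
  rcases eq_or_lt_of_le hPnn with hP0 | hPpos
  · exfalso
    have h0 : T ^ α = 0 := by
      rw [hTdef, ← hP0, Real.zero_rpow hβ1.ne', mul_zero]
    exact (Real.rpow_pos_of_pos hT α).ne' h0
  set P := φ k₀ with hPdef
  set μ := α / (β - 1) with hμ
  have hμpos : 0 < μ := div_pos hα hβ1
  set k : ℕ → ℝ := fun n => k₀ + T - T * (2:ℝ) ^ (-(n:ℝ)) with hk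
  have h2pos : (0:ℝ) < 2 := two_pos
  have hc : ∀ x : ℝ, (0:ℝ) < (2:ℝ) ^ x := fun x => Real.rpow_pos_of_pos h2pos _
  have hc1 : ∀ n : ℕ, (2:ℝ) ^ (-(n:ℝ)) ≤ 1 := by
    intro n
    apply Real.rpow_le_one_of_one_le_of_nonpos (by norm_num)
    simp
  have hk0k : ∀ n, k₀ ≤ k n := by
    intro n
    have : T * (2:ℝ) ^ (-(n:ℝ)) ≤ T * 1 :=
      mul_le_mul_of_nonneg_left (hc1 n) hT.le
    simp only [hk]; linarith
  have hkle : ∀ n, k n ≤ k₀ + T := by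
    intro n
    have := mul_pos hT (hc (-(n:ℝ)))
    simp only [hk]; linarith
  have hdouble : ∀ n : ℕ, (2:ℝ) ^ (-(n:ℝ)) = (2:ℝ) ^ (-((n:ℝ)+1)) * 2 := by
    intro n
    have h := Real.rpow_add h2pos (-((n:ℝ)+1)) 1
    rw [Real.rpow_one] at h
    rw [show -(n:ℝ) = -((n:ℝ)+1)+1 by ring, h]
  have hstep : ∀ n : ℕ, k (n+1) - k n = T * (2:ℝ) ^ (-((n:ℝ)+1)) := by
    intro n
    simp only [hk]
    push_cast
    rw [hdouble n]
    ring
  have key : ∀ n : ℕ, φ (k n) ≤ P * (2:ℝ) ^ (-(n:ℝ) * μ) := by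
    intro n
    induction n with
    | zero =>
      simp only [hk, Nat.cast_zero, neg_zero, Real.rpow_zero, zero_mul, mul_one]
      exact le_of_eq (by norm_num [hPdef])
    | succ n ih =>
      have hlt : k n < k (n+1) := by
        have := hstep n
        have := mul_pos hT (hc (-((n:ℝ)+1)))
        linarith
      have h1 := hiter (k (n+1)) (k n) (hk0k n) hlt
      have hφn : 0 ≤ φ (k n) := hφ_nonneg _ (le_trans hk₀ (hk0k n))
      have h2 : (φ (k n)) ^ β ≤ (P * (2:ℝ) ^ (-(n:ℝ) * μ)) ^ β :=
        Real.rpow_le_rpow hφn ih (by linarith)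
      have h3 : φ (k (n+1)) ≤ d * (T * (2:ℝ) ^ (-((n:ℝ)+1))) ^ (-α)
          * (P * (2:ℝ) ^ (-(n:ℝ) * μ)) ^ β := by
        calc φ (k (n+1)) ≤ d * (k (n+1) - k n) ^ (-α) * (φ (k n)) ^ β := h1
          _ ≤ _ := by
            rw [hstep n]
            apply mul_le_mul_of_nonneg_left h2
            positivity
      refine h3.trans (le_of_eq ?_)
      -- now the algebra
      have hQpos : (0:ℝ) < (2:ℝ) ^ (-(n:ℝ) * μ) := hc _
      have hcpos : (0:ℝ) < (2:ℝ) ^ (-((n:ℝ)+1)) := hc _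
      have hTneg : T ^ (-α) = d⁻¹ * ((2:ℝ) ^ (-(α*β/(β-1))) * P ^ (-(β-1))) := by
        rw [Real.rpow_neg hT.le, hTdef, mul_inv, mul_inv,
          Real.rpow_neg h2pos.le, Real.rpow_neg hPpos.le]
        ring
      have hcast : ((n+1:ℕ):ℝ) = (n:ℝ)+1 := by push_cast; ring
      rw [hcast, Real.mul_rpow hT.le hcpos.le, Real.mul_rpow hPpos.le hQpos.le, hTneg,
        ← Real.rpow_mul h2pos.le, ← Real.rpow_mul h2pos.le]
      rw [show ∀ A C E : ℝ, d * (d⁻¹ * ((2:ℝ)^A * P^(-(β-1))) * (2:ℝ)^C) * (P^β * (2:ℝ)^E)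
          = (d * d⁻¹) * ((P^(-(β-1)) * P^β) * ((2:ℝ)^A * (2:ℝ)^C * (2:ℝ)^E))
          from fun A C E => by ring]
      rw [mul_inv_cancel₀ hd.ne', one_mul, ← Real.rpow_add hPpos, ← Real.rpow_add h2pos,
        ← Real.rpow_add h2pos, show -(β-1) + β = (1:ℝ) by ring, Real.rpow_one]
      congr 1
      rw [hμ]
      field_simp
      ring
  -- conclusion
  have hmono : ∀ n : ℕ, φ (k₀ + T) ≤ P * (2:ℝ) ^ (-(n:ℝ) * μ) := fun n =>
    (hφ_mono (k n) (k₀ + T) (le_trans hk₀ (hk0k n)) (hkle n)).trans (key n)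
  have hlim : Filter.Tendsto (fun n : ℕ => P * (2:ℝ) ^ (-(n:ℝ) * μ)) Filter.atTop (nhds 0) := by
    have heq : ∀ n : ℕ, P * (2:ℝ) ^ (-(n:ℝ) * μ) = P * ((2:ℝ) ^ (-μ)) ^ n := by
      intro n
      rw [← Real.rpow_natCast ((2:ℝ) ^ (-μ)) n, ← Real.rpow_mul h2pos.le]
      ring_nf
    simp only [heq]
    rw [show (0:ℝ) = P * 0 by ring]
    apply Filter.Tendsto.const_mul
    apply tendsto_pow_atTop_nhds_zero_of_lt_one (hc (-μ)).le
    apply Real.rpow_lt_one_of_one_lt_of_neg (by norm_num) (by linarith)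
  have hφT : 0 ≤ φ (k₀ + T) := hφ_nonneg _ (by linarith)
  have : φ (k₀ + T) ≤ 0 :=
    le_of_tendsto_of_tendsto' tendsto_const_nhds hlim hmono
  linarith
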